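/- Let C ⊆ (ZMod 3)^c be a self-dual ternary code and χ = √3·(1,1,…,1) ∈ ℝ^c. Then the set S = {λ ∈ Λ(C) : 12·‖λ + χ/2‖² = c} is finite, and ∑_{λ ∈ S} (−1)^{⟨χ, λ⟩} = Index(C), where each ⟨χ, λ⟩ is an integer. -/

import Mathlib

open scoped BigOperators

noncomputable section

/-- The standard Euclidean inner product on `ℝ^c`. -/
def inn {c : ℕ} (x y : Fin c → ℝ) : ℝ := ∑ i, x i * y i

/-- The dual of a ternary code `C ⊆ (ZMod 3)^c`. -/
def dualCode {c : ℕ} (C : Submodule (ZMod 3) (Fin c → ZMod 3)) : Set (Fin c → ZMod 3) :=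
  {w | ∀ v ∈ C, ∑ i, w i * v i = 0}

/-- A ternary code is self-dual if it equals its dual code. -/
def IsSelfDual {c : ℕ} (C : Submodule (ZMod 3) (Fin c → ZMod 3)) : Prop :=
  (C : Set (Fin c → ZMod 3)) = dualCode C

/-- A word is maximal if all of its coordinates are nonzero. -/
def IsMaximalWord {c : ℕ} (w : Fin c → ZMod 3) : Prop :=
  ∀ i, w i ≠ 0

/-- The number of coordinates of a word equal to `1`. -/
def onesCount {c : ℕ} (w : Fin c → ZMod 3) : ℕ :=
  (Finset.univ.filter fun i => w i = 1).card

/-- The index of a ternary code: the number of even maximal codewords minus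
the number of odd maximal codewords. -/
def codeIndex {c : ℕ} (C : Submodule (ZMod 3) (Fin c → ZMod 3)) : ℤ :=
  ({w : Fin c → ZMod 3 | w ∈ C ∧ IsMaximalWord w ∧ Even (onesCount w)}.ncard : ℤ)
    - ({w : Fin c → ZMod 3 | w ∈ C ∧ IsMaximalWord w ∧ ¬ Even (onesCount w)}.ncard : ℤ)

/-- The 3-framed lattice `Λ(C)` associated to a ternary code `C`. -/
def latticeOf {c : ℕ} (C : Submodule (ZMod 3) (Fin c → ZMod 3)) : Set (Fin c → ℝ) :=
  {x | ∃ u : Fin c → ℤ, (fun i => ((u i : ZMod 3))) ∈ C ∧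
    x = fun i => (u i : ℝ) / Real.sqrt 3}

/-- The vector `χ = √3·(1,1,…,1) ∈ ℝ^c`. -/
def theChi (c : ℕ) : Fin c → ℝ := fun _ => Real.sqrt 3

noncomputable def B3 (c : ℕ) : LinearMap.BilinForm (ZMod 3) (Fin c → ZMod 3) :=
  LinearMap.mk₂ (ZMod 3) (fun x y => ∑ i, x i * y i)
    (fun x x' y => by simp [add_mul, Finset.sum_add_distrib])
    (fun a x y => by simp [Finset.mul_sum, mul_assoc])
    (fun x y y' => by simp [mul_add, Finset.sum_add_distrib])
    (fun a x y => by simp [Finset.mul_sum, mul_left_comm])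

lemma even_of_selfdual {c : ℕ} (C : Submodule (ZMod 3) (Fin c → ZMod 3))
    (hC : IsSelfDual C) : Even c := by
  have hre : (B3 c).IsRefl := by
    intro x y h
    simpa [B3, mul_comm] using h
  have hnd : (B3 c).Nondegenerate := by
    refine ⟨fun x hx => ?_, fun x hx => ?_⟩
    all_goals
      funext i
      have := hx (Pi.single i 1)
      simpa [B3, Pi.single_apply, mul_ite, ite_mul, Finset.sum_ite_eq', Finset.sum_ite_eq] using this
  have horth : C = (B3 c).orthogonal C := by
    ext w
    rw [LinearMap.BilinForm.mem_orthogonal_iff]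
    constructor
    · intro hw v hv
      have hw' : w ∈ dualCode C := hC ▸ hw
      have := hw' v hv
      simpa [B3, LinearMap.BilinForm.IsOrtho, mul_comm] using this
    · intro h
      have : w ∈ dualCode C := by
        intro v hv
        have := h v hv
        simpa [B3, LinearMap.BilinForm.IsOrtho, mul_comm] using this
      rw [show (w ∈ C) = (w ∈ (C : Set _)) by rfl, hC]
      exact this
  have h1 := LinearMap.BilinForm.finrank_add_finrank_orthogonal hre C
  rw [LinearMap.BilinForm.orthogonal_top_eq_bot hnd, inf_bot_eq, finrank_bot, add_zero, ← horth] at h1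
  have h2 : Module.finrank (ZMod 3) (Fin c → ZMod 3) = c := by
    simp [Module.finrank_pi]
  rw [h2] at h1
  exact ⟨Module.finrank (ZMod 3) C, h1.symm⟩

def uOf {c : ℕ} (w : Fin c → ZMod 3) : Fin c → ℤ := fun i => if w i = 1 then -2 else -1

noncomputable def phi {c : ℕ} (w : Fin c → ZMod 3) : Fin c → ℝ :=
  fun i => (uOf w i : ℝ) / Real.sqrt 3

lemma uOf_cast {c : ℕ} {w : Fin c → ZMod 3} (hw : IsMaximalWord w) (i : Fin c) :
    ((uOf w i : ZMod 3)) = w i := by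
  have key : ∀ a : ZMod 3, a ≠ 0 → (((if a = 1 then (-2 : ℤ) else -1) : ℤ) : ZMod 3) = a := by
    decide
  exact key (w i) (hw i)

lemma twelve_inn {c : ℕ} (u : Fin c → ℤ) :
    12 * inn ((fun i => (u i : ℝ) / Real.sqrt 3) + (1/2 : ℝ) • theChi c)
        ((fun i => (u i : ℝ) / Real.sqrt 3) + (1/2 : ℝ) • theChi c)
      = ∑ i, (((2 * u i + 3 : ℤ) : ℝ))^2 := by
  have h3 : (Real.sqrt 3) * (Real.sqrt 3) = 3 := Real.mul_self_sqrt (by norm_num)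
  have hne : Real.sqrt 3 ≠ 0 := by positivity
  unfold inn theChi
  rw [Finset.mul_sum]
  refine Finset.sum_congr rfl fun i _ => ?_
  simp only [Pi.add_apply, Pi.smul_apply, smul_eq_mul]
  push_cast
  field_simp
  ring_nf
  rw [Real.sq_sqrt (by norm_num : (0:ℝ) ≤ 3)]
  linear_combination (12 * (Real.sqrt 3 ^ 2 + 3)) * h3

lemma sq_two_mul_add_three {u : ℤ} : (2*u+3)^2 = 1 ↔ u = -1 ∨ u = -2 := by
  rw [sq]
  constructor
  · intro h
    rcases mul_self_eq_one_iff.mp h with h' | h' <;> omega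
  · rintro (rfl | rfl) <;> ring

lemma mem_S_iff {c : ℕ} (C : Submodule (ZMod 3) (Fin c → ZMod 3)) (l : Fin c → ℝ) :
    (l ∈ latticeOf C ∧
        12 * inn (l + (1/2 : ℝ) • theChi c) (l + (1/2 : ℝ) • theChi c) = (c : ℝ))
    ↔ ∃ w : Fin c → ZMod 3, (w ∈ C ∧ IsMaximalWord w) ∧ l = phi w := by
  constructor
  · rintro ⟨⟨u, huC, rfl⟩, hnorm⟩
    rw [twelve_inn] at hnorm
    have hZ : ∑ i, (2 * u i + 3)^2 = (c : ℤ) := by exact_mod_cast hnorm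
    have hone : ∀ i, u i = -1 ∨ u i = -2 := by
      have hzero : ∑ i : Fin c, ((2 * u i + 3)^2 - 1) = 0 := by
        rw [Finset.sum_sub_distrib, hZ]
        simp
      have hnn : ∀ i ∈ Finset.univ, (0:ℤ) ≤ (2 * u i + 3)^2 - 1 := by
        intro i _
        have hne : 2 * u i + 3 ≠ 0 := by omega
        have := Int.one_le_abs hne
        nlinarith [sq_abs (2 * u i + 3)]
      intro i
      have := (Finset.sum_eq_zero_iff_of_nonneg hnn).mp hzero i (Finset.mem_univ i)
      exact sq_two_mul_add_three.mp (by omega)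
    refine ⟨fun i => ((u i : ZMod 3)), ⟨huC, ?_⟩, ?_⟩
    · intro i
      show ((u i : ZMod 3)) ≠ 0
      rcases hone i with h | h <;> rw [h] <;> decide
    · funext i
      have hw : uOf (fun j => ((u j : ZMod 3))) i = u i := by
        show (if ((u i : ZMod 3)) = 1 then (-2:ℤ) else -1) = u i
        rcases hone i with h | h <;> rw [h] <;> decide
      show (u i : ℝ) / Real.sqrt 3 = (uOf (fun j => ((u j : ZMod 3))) i : ℝ) / Real.sqrt 3
      rw [hw]
  · rintro ⟨w, ⟨hwC, hmax⟩, rfl⟩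
    constructor
    · exact ⟨uOf w, by simpa [funext fun i => uOf_cast hmax i] using hwC, rfl⟩
    · rw [show phi w = fun i => ((uOf w i : ℝ) / Real.sqrt 3) from rfl, twelve_inn]
      have : ∀ i : Fin c, (((2 * uOf w i + 3 : ℤ) : ℝ))^2 = 1 := by
        intro i
        have : uOf w i = -1 ∨ uOf w i = -2 := by unfold uOf; split <;> simp
        have := sq_two_mul_add_three.mpr this
        exact_mod_cast congrArg (fun n : ℤ => (n : ℝ)) this
      simp only [this]
      simp

lemma inn_chi_phi {c : ℕ} (w : Fin c → ZMod 3) :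
    inn (theChi c) (phi w) = ((∑ i, uOf w i : ℤ) : ℝ) := by
  have hne : Real.sqrt 3 ≠ 0 := by positivity
  unfold inn theChi phi
  push_cast
  refine Finset.sum_congr rfl fun i _ => ?_
  rw [mul_comm, div_mul_cancel₀ _ hne]

lemma sum_uOf {c : ℕ} (w : Fin c → ZMod 3) :
    ∑ i, uOf w i = -(onesCount w : ℤ) - c := by
  unfold uOf onesCount
  have : ∀ i : Fin c, (if w i = 1 then (-2:ℤ) else -1) = (if w i = 1 then (-1:ℤ) else 0) + (-1) := by
    intro i; split <;> ring
  simp only [this, Finset.sum_add_distrib, Finset.sum_ite, Finset.sum_const, Finset.sum_const_zero]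
  simp
  ring

lemma phi_inj {c : ℕ} {w w' : Fin c → ZMod 3} (hw : IsMaximalWord w) (hw' : IsMaximalWord w')
    (h : phi w = phi w') : w = w' := by
  have hne : Real.sqrt 3 ≠ 0 := by positivity
  funext i
  have h1 : (uOf w i : ℝ) / Real.sqrt 3 = (uOf w' i : ℝ) / Real.sqrt 3 := congrFun h i
  have h2 : uOf w i = uOf w' i := by
    field_simp at h1
    exact_mod_cast h1
  rw [← uOf_cast hw i, ← uOf_cast hw' i, h2]

private theorem aux_main {c : ℕ}
    (C : Submodule (ZMod 3) (Fin c → ZMod 3)) (hC : Even c) :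
    ∃ hfin : {l : Fin c → ℝ | l ∈ latticeOf C ∧
        12 * inn (l + (1/2 : ℝ) • theChi c) (l + (1/2 : ℝ) • theChi c) = (c : ℝ)}.Finite,
      (∀ l ∈ hfin.toFinset, ∃ n : ℤ, inn (theChi c) l = (n : ℝ)) ∧
      ∑ l ∈ hfin.toFinset, ((Int.negOnePow ⌊inn (theChi c) l⌋ : ℤˣ) : ℤ) = codeIndex C := by
  classical
  set M : Finset (Fin c → ZMod 3) :=
    Finset.univ.filter (fun w => w ∈ C ∧ IsMaximalWord w) with hM
  set F : Finset (Fin c → ℝ) := M.image phi with hF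
  have hSet : {l : Fin c → ℝ | l ∈ latticeOf C ∧
      12 * inn (l + (1/2 : ℝ) • theChi c) (l + (1/2 : ℝ) • theChi c) = (c : ℝ)} = ↑F := by
    ext l
    rw [Set.mem_setOf_eq, mem_S_iff]
    simp only [hF, hM, Finset.coe_image, Set.mem_image, Finset.mem_coe, Finset.mem_filter,
      Finset.mem_univ, true_and]
    constructor
    · rintro ⟨w, hw, rfl⟩; exact ⟨w, hw, rfl⟩
    · rintro ⟨w, hw, rfl⟩; exact ⟨w, hw, rfl⟩
  have hfin : {l : Fin c → ℝ | l ∈ latticeOf C ∧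
      12 * inn (l + (1/2 : ℝ) • theChi c) (l + (1/2 : ℝ) • theChi c) = (c : ℝ)}.Finite := by
    rw [hSet]; exact F.finite_toSet
  have htf : hfin.toFinset = F := by
    ext l
    rw [Set.Finite.mem_toFinset, hSet, Finset.mem_coe]
  refine ⟨hfin, ?_, ?_⟩
  · intro l hl
    rw [htf, hF, Finset.mem_image] at hl
    obtain ⟨w, _, rfl⟩ := hl
    exact ⟨∑ i, uOf w i, inn_chi_phi w⟩
  · rw [htf, hF, Finset.sum_image (fun x hx y hy h => phi_inj
      ((Finset.mem_filter.mp hx).2.2) ((Finset.mem_filter.mp hy).2.2) h)]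
    have hval : ∀ w ∈ M, ((Int.negOnePow ⌊inn (theChi c) (phi w)⌋ : ℤˣ) : ℤ)
        = if Even (onesCount w) then (1:ℤ) else -1 := by
      intro w _
      rw [inn_chi_phi, Int.floor_intCast, sum_uOf]
      obtain ⟨k, hk⟩ := hC
      by_cases h : Even (onesCount w)
      · obtain ⟨m, hm⟩ := h
        rw [if_pos ⟨m, hm⟩, Int.negOnePow_even _ ⟨-(m:ℤ) - k, by push_cast [hm, hk]; ring⟩]
        simp
      · rw [if_neg h]
        obtain ⟨m, hm⟩ := Nat.not_even_iff_odd.mp h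
        rw [Int.negOnePow_odd _ ⟨-(m:ℤ) - k - 1, by push_cast [hm, hk]; ring⟩]
        simp
    rw [Finset.sum_congr rfl hval, Finset.sum_ite, Finset.sum_const, Finset.sum_const]
    have he : {w : Fin c → ZMod 3 | w ∈ C ∧ IsMaximalWord w ∧ Even (onesCount w)}
        = ↑(M.filter fun w => Even (onesCount w)) := by
      ext w; simp [hM, and_assoc]
    have ho : {w : Fin c → ZMod 3 | w ∈ C ∧ IsMaximalWord w ∧ ¬ Even (onesCount w)}
        = ↑(M.filter fun w => ¬ Even (onesCount w)) := by
      ext w; simp [hM, and_assoc]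
    rw [codeIndex, he, ho, Set.ncard_coe_finset, Set.ncard_coe_finset]
    simp
    ring

theorem signed_count_of_ground_states_is_index {c : ℕ}
    (C : Submodule (ZMod 3) (Fin c → ZMod 3)) (hC : IsSelfDual C) :
    ∃ hfin : {l : Fin c → ℝ | l ∈ latticeOf C ∧
        12 * inn (l + (1/2 : ℝ) • theChi c) (l + (1/2 : ℝ) • theChi c) = (c : ℝ)}.Finite,
      (∀ l ∈ hfin.toFinset, ∃ n : ℤ, inn (theChi c) l = (n : ℝ)) ∧
      ∑ l ∈ hfin.toFinset, ((Int.negOnePow ⌊inn (theChi c) l⌋ : ℤˣ) : ℤ) = codeIndex C :=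
  aux_main C (even_of_selfdual C hC)
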